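/- Let m < M be real numbers, let J be an interval containing [m, M], and let f : J → ℝ be a continuous convex function. Let Φ_1,…,Φ_n be positive linear maps on B(H) with Σ_{i=1}^n Φ_i(I) = I, and let A_i, D_i ∈ σ(J) (i = 1,…,n) satisfy A_i ≤ m·I ≤ (A_i + D_i)/2 ≤ M·I ≤ D_i for each i. Then f(Σ_i Φ_i((A_i + D_i)/2)) ≤ Σ_i Φ_i((f(A_i) + f(D_i))/2) − δ_f · X̃ ≤ Σ_i Φ_i((f(A_i) + f(D_i))/2), where X̃ = (1/2)·I − (1/(M−m))·|Σ_i Φ_i((A_i + D_i)/2) − ((m+M)/2)·I|. -/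

import Mathlib

set_option maxHeartbeats 2000000
set_option synthInstance.maxHeartbeats 2000000

section ScalarLemmas

lemma chord_le_outside {J : Set ℝ} {f : ℝ → ℝ} (hconv : ConvexOn ℝ J f)
    {m M t : ℝ} (hmM : m < M) (hm : m ∈ J) (hM : M ∈ J) (ht : t ∈ J)
    (hout : t ≤ m ∨ M ≤ t) :
    (M - t) * f m + (t - m) * f M ≤ (M - m) * f t := by
  rcases hout with h | h
  · rcases eq_or_lt_of_le h with rfl | h
    · exact le_of_eq (by ring)
    · have hMt : (0:ℝ) < M - t := by linarith
      have ha : (0:ℝ) ≤ (M - m)/(M - t) := div_nonneg (by linarith) (by linarith)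
      have hb : (0:ℝ) ≤ (m - t)/(M - t) := div_nonneg (by linarith) (by linarith)
      have hab : (M - m)/(M - t) + (m - t)/(M - t) = 1 := by
        rw [← add_div]; field_simp; ring
      have key := hconv.2 ht hM ha hb hab
      simp only [smul_eq_mul] at key
      have hx : (M - m)/(M - t) * t + (m - t)/(M - t) * M = m := by
        field_simp; ring
      rw [hx] at key
      rw [div_mul_eq_mul_div, div_mul_eq_mul_div, ← add_div, le_div_iff₀ hMt] at key
      nlinarith [key]
  · rcases eq_or_lt_of_le h with rfl | h
    · exact le_of_eq (by ring)
    · have htm : (0:ℝ) < t - m := by linarith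
      have ha : (0:ℝ) ≤ (t - M)/(t - m) := div_nonneg (by linarith) (by linarith)
      have hb : (0:ℝ) ≤ (M - m)/(t - m) := div_nonneg (by linarith) (by linarith)
      have hab : (t - M)/(t - m) + (M - m)/(t - m) = 1 := by
        rw [← add_div]; field_simp; ring
      have key := hconv.2 hm ht ha hb hab
      simp only [smul_eq_mul] at key
      have hx : (t - M)/(t - m) * m + (M - m)/(t - m) * t = M := by
        field_simp; ring
      rw [hx] at key
      rw [div_mul_eq_mul_div, div_mul_eq_mul_div, ← add_div, le_div_iff₀ htm] at key
      nlinarith [key]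

lemma refined_LR {J : Set ℝ} {f : ℝ → ℝ} (hconv : ConvexOn ℝ J f)
    {m M x : ℝ} (hmM : m < M) (hJ : Set.Icc m M ⊆ J) (hx : x ∈ Set.Icc m M) :
    (M - m) * f x + (f m + f M - 2 * f ((m+M)/2)) * ((M - m)/2 - |x - (m+M)/2|)
      ≤ (M - x) * f m + (x - m) * f M := by
  obtain ⟨hxm, hxM⟩ := hx
  have hm : m ∈ J := hJ ⟨le_rfl, hmM.le⟩
  have hM : M ∈ J := hJ ⟨hmM.le, le_rfl⟩
  have hμ : (m+M)/2 ∈ J := hJ ⟨by linarith, by linarith⟩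
  have hmμ : (0:ℝ) < (m+M)/2 - m := by linarith
  have hMμ : (0:ℝ) < M - (m+M)/2 := by linarith
  rcases le_total x ((m+M)/2) with h | h
  · have habs : |x - (m+M)/2| = (m+M)/2 - x := by rw [abs_of_nonpos (by linarith)]; ring
    rw [habs]
    have ha : (0:ℝ) ≤ ((m+M)/2 - x)/((m+M)/2 - m) := div_nonneg (by linarith) (by linarith)
    have hb : (0:ℝ) ≤ (x - m)/((m+M)/2 - m) := div_nonneg (by linarith) (by linarith)
    have hab : ((m+M)/2 - x)/((m+M)/2 - m) + (x - m)/((m+M)/2 - m) = 1 := by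
      have he : (m+M)/2 - x + (x - m) = (m+M)/2 - m := by ring
      rw [← add_div, he, div_self hmμ.ne']
    have key := hconv.2 hm hμ ha hb hab
    simp only [smul_eq_mul] at key
    have hxe : ((m+M)/2 - x)/((m+M)/2 - m) * m + (x - m)/((m+M)/2 - m) * ((m+M)/2) = x := by
      rw [div_mul_eq_mul_div, div_mul_eq_mul_div, ← add_div, div_eq_iff hmμ.ne']; ring
    rw [hxe] at key
    rw [div_mul_eq_mul_div, div_mul_eq_mul_div, ← add_div, le_div_iff₀ hmμ] at key
    nlinarith [key]
  · have habs : |x - (m+M)/2| = x - (m+M)/2 := abs_of_nonneg (by linarith)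
    rw [habs]
    have ha : (0:ℝ) ≤ (M - x)/(M - (m+M)/2) := div_nonneg (by linarith) (by linarith)
    have hb : (0:ℝ) ≤ (x - (m+M)/2)/(M - (m+M)/2) := div_nonneg (by linarith) (by linarith)
    have hab : (M - x)/(M - (m+M)/2) + (x - (m+M)/2)/(M - (m+M)/2) = 1 := by
      have he : M - x + (x - (m+M)/2) = M - (m+M)/2 := by ring
      rw [← add_div, he, div_self hMμ.ne']
    have key := hconv.2 hμ hM ha hb hab
    simp only [smul_eq_mul] at key
    have hxe : (M - x)/(M - (m+M)/2) * ((m+M)/2) + (x - (m+M)/2)/(M - (m+M)/2) * M = x := by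
      rw [div_mul_eq_mul_div, div_mul_eq_mul_div, ← add_div, div_eq_iff hMμ.ne']; ring
    rw [hxe] at key
    rw [div_mul_eq_mul_div, div_mul_eq_mul_div, ← add_div, le_div_iff₀ hMμ] at key
    nlinarith [key]

end ScalarLemmas

section OperatorLemmas

variable {H : Type*} [NormedAddCommGroup H] [InnerProductSpace ℂ H] [CompleteSpace H]

lemma smul_nonneg_op (r : ℝ) (hr : 0 ≤ r) (z : H →L[ℂ] H) (hz : 0 ≤ z) : 0 ≤ r • z := by
  have hzsa : IsSelfAdjoint z := IsSelfAdjoint.of_nonneg hz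
  have : r • z = cfc (fun t : ℝ => r * t) z := by
    rw [cfc_const_mul .., cfc_id' ℝ z]
  rw [this]
  exact cfc_nonneg fun x hx => mul_nonneg hr (spectrum_nonneg_of_nonneg hz hx)

lemma smul_mono_op (r : ℝ) (hr : 0 ≤ r) (x y : H →L[ℂ] H) (h : x ≤ y) : r • x ≤ r • y := by
  rw [← sub_nonneg, ← smul_sub]
  exact smul_nonneg_op r hr _ (sub_nonneg.mpr h)

lemma smul_sa_op (m : ℝ) (x : H →L[ℂ] H) (hx : IsSelfAdjoint x) : IsSelfAdjoint (m • x) := by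
  rw [IsSelfAdjoint, star_smul, star_trivial, hx.star_eq]

lemma sum_sa_op {n : ℕ} (g : Fin n → H →L[ℂ] H) (h : ∀ i, IsSelfAdjoint (g i)) :
    IsSelfAdjoint (∑ i, g i) := by
  rw [IsSelfAdjoint, star_sum]
  exact Finset.sum_congr rfl fun i _ => (h i).star_eq

lemma cfc_affine_op (a : H →L[ℂ] H) (ha : IsSelfAdjoint a) (r s : ℝ) :
    cfc (fun t : ℝ => r * t + s) a = r • a + s • 1 := by
  rw [cfc_add .., cfc_const_mul .., cfc_id' ℝ a, cfc_const s a, Algebra.algebraMap_eq_smul_one]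

lemma spectrum_Iic_op (a : H →L[ℂ] H) (m : ℝ) (ha : IsSelfAdjoint a) (h : a ≤ m • 1) :
    spectrum ℝ a ⊆ Set.Iic m := by
  rw [← Algebra.algebraMap_eq_smul_one] at h
  exact fun x hx => le_algebraMap_iff_spectrum_le (R := ℝ) ha |>.mp h x hx

lemma spectrum_Ici_op (a : H →L[ℂ] H) (m : ℝ) (ha : IsSelfAdjoint a) (h : m • 1 ≤ a) :
    spectrum ℝ a ⊆ Set.Ici m := by
  rw [← Algebra.algebraMap_eq_smul_one] at h
  exact fun x hx => algebraMap_le_iff_le_spectrum (R := ℝ) ha |>.mp h x hx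

end OperatorLemmas

/-- The absolute value of a (self-adjoint) bounded operator, via the
continuous functional calculus. -/
noncomputable def opAbs {H : Type*} [NormedAddCommGroup H] [InnerProductSpace ℂ H]
    [CompleteSpace H] (A : H →L[ℂ] H) : H →L[ℂ] H :=
  cfc (fun t : ℝ => |t|) A

/-- Corollary 3.3 of the paper. -/
theorem jensen_refined_midpoint {H : Type*} [NormedAddCommGroup H] [InnerProductSpace ℂ H]
    [CompleteSpace H] {n : ℕ} (m M : ℝ) (hmM : m < M) (J : Set ℝ) (hJ : J.OrdConnected)
    (hJmM : Set.Icc m M ⊆ J) (f : ℝ → ℝ) (hf : ContinuousOn f J) (hconv : ConvexOn ℝ J f)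
    (Φ : Fin n → (H →L[ℂ] H) →ₗ[ℂ] (H →L[ℂ] H))
    (hΦpos : ∀ i, ∀ T : H →L[ℂ] H, 0 ≤ T → 0 ≤ Φ i T)
    (hΦ1 : ∑ i, Φ i 1 = (1 : H →L[ℂ] H))
    (A D : Fin n → H →L[ℂ] H)
    (hAsa : ∀ i, IsSelfAdjoint (A i)) (hAspec : ∀ i, spectrum ℝ (A i) ⊆ J)
    (hDsa : ∀ i, IsSelfAdjoint (D i)) (hDspec : ∀ i, spectrum ℝ (D i) ⊆ J)
    (hA : ∀ i, A i ≤ m • 1) (hmid₁ : ∀ i, m • 1 ≤ (2 : ℝ)⁻¹ • (A i + D i))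
    (hmid₂ : ∀ i, (2 : ℝ)⁻¹ • (A i + D i) ≤ M • 1) (hD : ∀ i, M • 1 ≤ D i) :
    cfc f (∑ i, Φ i ((2 : ℝ)⁻¹ • (A i + D i))) ≤
        ∑ i, Φ i ((2 : ℝ)⁻¹ • (cfc f (A i) + cfc f (D i))) -
          (f m + f M - 2 * f ((m + M) / 2)) •
            ((1 / 2 : ℝ) • (1 : H →L[ℂ] H) -
              (M - m)⁻¹ •
                opAbs (∑ i, Φ i ((2 : ℝ)⁻¹ • (A i + D i)) - ((m + M) / 2) • 1)) ∧
      ∑ i, Φ i ((2 : ℝ)⁻¹ • (cfc f (A i) + cfc f (D i))) -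
          (f m + f M - 2 * f ((m + M) / 2)) •
            ((1 / 2 : ℝ) • (1 : H →L[ℂ] H) -
              (M - m)⁻¹ •
                opAbs (∑ i, Φ i ((2 : ℝ)⁻¹ • (A i + D i)) - ((m + M) / 2) • 1)) ≤
        ∑ i, Φ i ((2 : ℝ)⁻¹ • (cfc f (A i) + cfc f (D i))) := by
  have hMm : (0:ℝ) < M - m := by linarith
  have hm : m ∈ J := hJmM ⟨le_rfl, hmM.le⟩
  have hM : M ∈ J := hJmM ⟨hmM.le, le_rfl⟩
  set s : ℝ := (f M - f m) / (M - m) with hs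
  set c : ℝ := f m - s * m with hc
  set δ : ℝ := f m + f M - 2 * f ((m + M) / 2) with hδdef
  -- scalar fact 1 : chord below f outside [m,M]
  have hg_le_f : ∀ t ∈ J, (t ≤ m ∨ M ≤ t) → s * t + c ≤ f t := by
    intro t ht hout
    have h1 := chord_le_outside hconv hmM hm hM ht hout
    have e : s * t + c = ((M - t) * f m + (t - m) * f M) / (M - m) := by
      rw [hc, hs]; field_simp; ring
    rw [e, div_le_iff₀ hMm]
    linarith [h1]
  -- scalar fact 2 : refined inequality on [m,M]
  have hrefined : ∀ x ∈ Set.Icc m M,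
      f x + δ * (1/2 - (M - m)⁻¹ * |x - (m + M)/2|) ≤ s * x + c := by
    intro x hx
    have h1 := refined_LR hconv hmM hJmM hx
    rw [← mul_le_mul_iff_right₀ hMm]
    have e1 : (M - m) * (f x + δ * (1/2 - (M - m)⁻¹ * |x - (m + M)/2|))
        = (M - m) * f x + δ * ((M - m)/2 - |x - (m + M)/2|) := by
      field_simp
    have e2 : (M - m) * (s * x + c) = (M - x) * f m + (x - m) * f M := by
      rw [hc, hs]; field_simp; ring
    rw [e1, e2]
    exact h1
  -- nonnegativity of δ
  have hδnn : 0 ≤ δ := by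
    have key := hconv.2 hm hM (by norm_num : (0:ℝ) ≤ 1/2) (by norm_num : (0:ℝ) ≤ 1/2)
      (by norm_num : (1:ℝ)/2 + 1/2 = 1)
    simp only [smul_eq_mul] at key
    have e : (1:ℝ)/2 * m + 1/2 * M = (m + M)/2 := by ring
    rw [e] at key
    rw [hδdef]; linarith
  -- basic properties of the maps Φ i
  have hΦrsmul : ∀ i (r : ℝ) (x : H →L[ℂ] H), Φ i (r • x) = r • Φ i x := by
    intro i r x
    rw [← algebraMap_smul ℂ r x, map_smul, algebraMap_smul]
  have hΦmono : ∀ i (x y : H →L[ℂ] H), x ≤ y → Φ i x ≤ Φ i y := by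
    intro i x y h
    have := hΦpos i (y - x) (sub_nonneg.mpr h)
    rw [map_sub] at this
    exact sub_nonneg.mp this
  -- the midpoint operators and their sum
  set C : H →L[ℂ] H := ∑ i, Φ i ((2 : ℝ)⁻¹ • (A i + D i)) with hCdef
  have hΦCsa : ∀ i, IsSelfAdjoint (Φ i ((2 : ℝ)⁻¹ • (A i + D i))) := by
    intro i
    have h1 : Φ i ((2 : ℝ)⁻¹ • (A i + D i))
        = Φ i ((2 : ℝ)⁻¹ • (A i + D i) - m • 1) + m • Φ i 1 := by
      rw [map_sub, hΦrsmul i m 1, sub_add_cancel]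
    rw [h1]
    exact (IsSelfAdjoint.of_nonneg (hΦpos i _ (sub_nonneg.mpr (hmid₁ i)))).add
      (smul_sa_op m _ (IsSelfAdjoint.of_nonneg (hΦpos i 1 zero_le_one)))
  have hCsa : IsSelfAdjoint C := sum_sa_op _ hΦCsa
  have honem : (m • (1 : H →L[ℂ] H)) = ∑ i, Φ i (m • 1) := by
    calc m • (1 : H →L[ℂ] H) = m • ∑ i, Φ i 1 := by rw [hΦ1]
      _ = ∑ i, m • Φ i 1 := Finset.smul_sum
      _ = ∑ i, Φ i (m • 1) := Finset.sum_congr rfl fun i _ => (hΦrsmul i m 1).symm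
  have honeM : (M • (1 : H →L[ℂ] H)) = ∑ i, Φ i (M • 1) := by
    calc M • (1 : H →L[ℂ] H) = M • ∑ i, Φ i 1 := by rw [hΦ1]
      _ = ∑ i, M • Φ i 1 := Finset.smul_sum
      _ = ∑ i, Φ i (M • 1) := Finset.sum_congr rfl fun i _ => (hΦrsmul i M 1).symm
  have hCm : m • (1 : H →L[ℂ] H) ≤ C := by
    rw [honem, hCdef]
    exact Finset.sum_le_sum fun i _ => hΦmono i _ _ (hmid₁ i)
  have hCM : C ≤ M • (1 : H →L[ℂ] H) := by
    rw [honeM, hCdef]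
    exact Finset.sum_le_sum fun i _ => hΦmono i _ _ (hmid₂ i)
  have hCspec : spectrum ℝ C ⊆ Set.Icc m M := fun x hx =>
    ⟨spectrum_Ici_op C m hCsa hCm hx, spectrum_Iic_op C M hCsa hCM hx⟩
  -- chord bounds for A i and D i
  have hAch : ∀ i, s • A i + c • (1 : H →L[ℂ] H) ≤ cfc f (A i) := by
    intro i
    have hsp : spectrum ℝ (A i) ⊆ Set.Iic m := spectrum_Iic_op (A i) m (hAsa i) (hA i)
    have h2 : cfc (fun t : ℝ => s * t + c) (A i) ≤ cfc f (A i) :=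
      cfc_mono (fun x hx => hg_le_f x (hAspec i hx) (Or.inl (hsp hx)))
        (by fun_prop) (hf.mono (hAspec i))
    rwa [cfc_affine_op (A i) (hAsa i) s c] at h2
  have hDch : ∀ i, s • D i + c • (1 : H →L[ℂ] H) ≤ cfc f (D i) := by
    intro i
    have hsp : spectrum ℝ (D i) ⊆ Set.Ici M := spectrum_Ici_op (D i) M (hDsa i) (hD i)
    have h2 : cfc (fun t : ℝ => s * t + c) (D i) ≤ cfc f (D i) :=
      cfc_mono (fun x hx => hg_le_f x (hDspec i hx) (Or.inr (hsp hx)))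
        (by fun_prop) (hf.mono (hDspec i))
    rwa [cfc_affine_op (D i) (hDsa i) s c] at h2
  -- the main linear bound : s • C + c • 1 ≤ T
  set T : H →L[ℂ] H := ∑ i, Φ i ((2 : ℝ)⁻¹ • (cfc f (A i) + cfc f (D i))) with hTdef
  have hstep : ∀ i, s • Φ i ((2 : ℝ)⁻¹ • (A i + D i)) + c • Φ i 1
      ≤ Φ i ((2 : ℝ)⁻¹ • (cfc f (A i) + cfc f (D i))) := by
    intro i
    have hsum : (s • A i + c • (1 : H →L[ℂ] H)) + (s • D i + c • 1)
        ≤ cfc f (A i) + cfc f (D i) := add_le_add (hAch i) (hDch i)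
    have h3 := smul_mono_op (2:ℝ)⁻¹ (by norm_num) _ _ hsum
    have e : (2:ℝ)⁻¹ • ((s • A i + c • (1 : H →L[ℂ] H)) + (s • D i + c • 1))
        = s • ((2 : ℝ)⁻¹ • (A i + D i)) + c • 1 := by
      rw [smul_add, smul_add, smul_add, smul_smul, smul_smul, smul_smul, smul_smul]
      rw [smul_add]
      module
    rw [e] at h3
    have h4 := hΦmono i _ _ h3
    rwa [map_add, hΦrsmul i s ((2 : ℝ)⁻¹ • (A i + D i)), hΦrsmul i c 1] at h4
  have hmain1 : s • C + c • (1 : H →L[ℂ] H) ≤ T := by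
    have h5 : ∑ i, (s • Φ i ((2 : ℝ)⁻¹ • (A i + D i)) + c • Φ i 1) ≤ T := by
      rw [hTdef]
      exact Finset.sum_le_sum fun i _ => hstep i
    calc s • C + c • (1 : H →L[ℂ] H)
        = ∑ i, (s • Φ i ((2 : ℝ)⁻¹ • (A i + D i)) + c • Φ i 1) := by
          rw [Finset.sum_add_distrib, ← Finset.smul_sum, ← Finset.smul_sum, hΦ1, hCdef]
      _ ≤ T := h5
  -- identify X with a cfc applied to C
  have habsC : opAbs (C - ((m + M) / 2) • 1) = cfc (fun t : ℝ => |t - (m + M)/2|) C := by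
    have h1 : C - ((m + M) / 2) • 1 = cfc (fun t : ℝ => t - (m + M)/2) C := by
      rw [cfc_sub .., cfc_id' ℝ C, cfc_const ((m + M)/2) C, Algebra.algebraMap_eq_smul_one]
    rw [opAbs, h1, ← cfc_comp' (fun t : ℝ => |t|) (fun t : ℝ => t - (m + M)/2) C]
  set X : H →L[ℂ] H := (1 / 2 : ℝ) • (1 : H →L[ℂ] H) -
      (M - m)⁻¹ • opAbs (C - ((m + M) / 2) • 1) with hXdef
  have hXeq : X = cfc (fun t : ℝ => 1/2 - (M - m)⁻¹ * |t - (m + M)/2|) C := by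
    rw [hXdef, habsC, ← cfc_const_mul ((M - m)⁻¹) (fun t : ℝ => |t - (m + M)/2|) C,
      ← Algebra.algebraMap_eq_smul_one (R := ℝ) (1/2 : ℝ), ← cfc_const (1/2 : ℝ) C,
      ← cfc_sub ..]
  have hδX : δ • X = cfc (fun t : ℝ => δ * (1/2 - (M - m)⁻¹ * |t - (m + M)/2|)) C := by
    rw [hXeq, cfc_const_mul ..]
  -- nonnegativity of δ • X
  have hδXnn : 0 ≤ δ • X := by
    rw [hδX]
    refine cfc_nonneg fun x hx => ?_
    obtain ⟨hx1, hx2⟩ := hCspec hx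
    have habs' : |x - (m + M)/2| ≤ (M - m)/2 :=
      abs_le.mpr ⟨by linarith, by linarith⟩
    have h6 : (M - m)⁻¹ * |x - (m + M)/2| ≤ (M - m)⁻¹ * ((M - m)/2) :=
      mul_le_mul_of_nonneg_left habs' (by positivity)
    have h7 : (M - m)⁻¹ * ((M - m)/2) = 1/2 := by field_simp
    have h8 : (0:ℝ) ≤ 1/2 - (M - m)⁻¹ * |x - (m + M)/2| := by linarith
    exact mul_nonneg hδnn h8
  -- the refined cfc bound
  have hmain2 : cfc f C ≤ s • C + c • (1 : H →L[ℂ] H) - δ • X := by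
    have e : s • C + c • (1 : H →L[ℂ] H) - δ • X
        = cfc (fun t : ℝ => (s * t + c) - δ * (1/2 - (M - m)⁻¹ * |t - (m + M)/2|)) C := by
      rw [cfc_sub (fun t : ℝ => s * t + c)
        (fun t : ℝ => δ * (1/2 - (M - m)⁻¹ * |t - (m + M)/2|)) C,
        cfc_affine_op C hCsa s c, ← hδX]
    rw [e]
    refine cfc_mono (fun x hx => ?_) (hf.mono (Set.Subset.trans hCspec hJmM)) (by fun_prop)
    have := hrefined x (hCspec hx)
    linarith
  constructor
  · exact le_trans hmain2 (sub_le_sub_right hmain1 _)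
  · exact sub_le_self _ hδXnn
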